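/- arXiv:1201.3441 — 3 statements merged into one kernel-verified Lean document; each statement's English description precedes it below -/
import Mathlib

section
/- Let 𝔐 be a graph-determined variety of rings. Then for every prime p and every integer n ≥ 2, the ring N_{0,p^n} does not belong to 𝔐. -/
/-- An element of a ring is a (one-sided or two-sided) zero-divisor: it is nonzero and
kills some nonzero element on the left or on the right. -/
def IsZD {R : Type*} [NonUnitalNonAssocRing R] (x : R) : Prop :=
  x ≠ 0 ∧ ∃ y : R, y ≠ 0 ∧ (x * y = 0 ∨ y * x = 0)

/-- The zero-divisor graph `Γ(R)` of a ring `R`: vertices are the nonzero zero-divisors,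
and distinct vertices `x`, `y` are adjacent iff `x*y = 0` or `y*x = 0`. -/
def zdvGraph (R : Type*) [NonUnitalNonAssocRing R] :
    SimpleGraph {x : R // IsZD x} where
  Adj a b := a ≠ b ∧ ((a : R) * (b : R) = 0 ∨ (b : R) * (a : R) = 0)
  symm := by
    constructor
    rintro a b ⟨hne, h⟩
    exact ⟨hne.symm, h.symm⟩
  loopless := by
    constructor
    rintro a ⟨hne, -⟩
    exact hne rfl

/-- A variety of (associative, not necessarily unital or commutative) rings: a class of
rings closed under isomorphisms, subrings, homomorphic images and arbitrary products. -/
structure RingVariety : Type 1 where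
  mem : ∀ (R : Type) [NonUnitalRing R], Prop
  closed_iso : ∀ (R S : Type) [NonUnitalRing R] [NonUnitalRing S],
    (R ≃+* S) → mem R → mem S
  closed_subring : ∀ (R : Type) [NonUnitalRing R] (S : NonUnitalSubring R),
    mem R → mem S
  closed_image : ∀ (R S : Type) [NonUnitalRing R] [NonUnitalRing S] (f : R →ₙ+* S),
    Function.Surjective f → mem R → mem S
  closed_prod : ∀ (ι : Type) (R : ι → Type) [∀ i, NonUnitalRing (R i)],
    (∀ i, mem (R i)) → mem (∀ i, R i)

/-- A variety is graph-determined if any two finite rings in it with isomorphic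
zero-divisor graphs are isomorphic. -/
def GraphDetermined (M : RingVariety) : Prop :=
  ∀ (R S : Type) [NonUnitalRing R] [NonUnitalRing S], Finite R → Finite S →
    M.mem R → M.mem S →
    Nonempty (zdvGraph R ≃g zdvGraph S) → Nonempty (R ≃+* S)

/-- The null ring on an abelian group `A`: all products are zero. -/
def NullRing (A : Type*) := A

instance {A : Type*} [AddCommGroup A] : NonUnitalRing (NullRing A) :=
  { (inferInstanceAs (AddCommGroup A) : AddCommGroup A) with
    mul := fun _ _ => (0 : A)
    left_distrib := fun _ _ _ => (add_zero (0 : A)).symm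
    right_distrib := fun _ _ _ => (add_zero (0 : A)).symm
    zero_mul := fun _ => rfl
    mul_zero := fun _ => rfl
    mul_assoc := fun _ _ _ => rfl }

-- auxiliary lemmas

lemma isZD_iff_ne_zero {R : Type} [NonUnitalRing R] (h : ∀ a b : R, a * b = 0) (x : R) :
    IsZD x ↔ x ≠ 0 :=
  ⟨fun hx => hx.1, fun hx => ⟨hx, x, hx, Or.inl (h x x)⟩⟩

lemma zdv_iso_of_card {R S : Type} [NonUnitalRing R] [NonUnitalRing S]
    [Finite R] [Finite S]
    (hR : ∀ a b : R, a * b = 0) (hS : ∀ a b : S, a * b = 0)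
    (hcard : Nat.card R = Nat.card S) :
    Nonempty (zdvGraph R ≃g zdvGraph S) := by
  classical
  obtain ⟨e⟩ := Finite.card_eq.mp hcard
  let e2 : R ≃ S := e.trans (Equiv.swap (e 0) 0)
  have he2 : e2 0 = 0 := by simp [e2]
  have hne : ∀ x : R, x ≠ 0 ↔ e2 x ≠ 0 := by
    intro x
    rw [← he2]
    exact not_congr (Iff.symm e2.injective.eq_iff)
  let e3 : {x : R // IsZD x} ≃ {x : S // IsZD x} :=
    e2.subtypeEquiv (fun x => by
      rw [isZD_iff_ne_zero hR, isZD_iff_ne_zero hS, hne])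
  refine ⟨⟨e3, ?_⟩⟩
  intro a b
  show (e3 a ≠ e3 b ∧ _) ↔ (a ≠ b ∧ _)
  constructor
  · rintro ⟨h1, -⟩
    exact ⟨fun h => h1 (by rw [h]), Or.inl (hR _ _)⟩
  · rintro ⟨h1, -⟩
    exact ⟨fun h => h1 (e3.injective h), Or.inl (hS _ _)⟩

/-- If `𝔐` is a graph-determined variety, then for every prime `p` and every `n ≥ 2`
the null ring on `ℤ/pⁿℤ` does not belong to `𝔐`. -/
theorem nullRing_pow_not_mem (M : RingVariety) (hgd : GraphDetermined M)
    (p : ℕ) (hp : p.Prime) (n : ℕ) (hn : 2 ≤ n) :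
    ¬ M.mem (NullRing (ZMod (p ^ n))) := by
  intro hmem
  have hp0 : 0 < p := hp.pos
  have hpn : NeZero (p ^ n) := ⟨pow_ne_zero n hp.ne_zero⟩
  have hpne : NeZero p := ⟨hp.ne_zero⟩
  -- the p-element null ring is a homomorphic image
  have hdvd : p ∣ p ^ n := dvd_pow_self p (by omega)
  let f0 : ZMod (p ^ n) →+* ZMod p := ZMod.castHom hdvd (ZMod p)
  let f : NullRing (ZMod (p ^ n)) →ₙ+* NullRing (ZMod p) :=
    { toFun := fun x => f0 x
      map_add' := map_add f0
      map_zero' := map_zero f0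
      map_mul' := fun a b => by
        show f0 0 = 0
        exact map_zero f0 }
  have hfsurj : Function.Surjective f := by
    intro y
    obtain ⟨k, rfl⟩ := ZMod.natCast_zmod_surjective (y : ZMod p)
    refine ⟨((k : ZMod (p ^ n)) : NullRing (ZMod (p ^ n))), ?_⟩
    show f0 (k : ZMod (p ^ n)) = (k : ZMod p)
    exact map_natCast f0 k
  have hmemp : M.mem (NullRing (ZMod p)) :=
    M.closed_image _ _ f hfsurj hmem
  -- the product ring
  let S := ∀ _ : Fin n, NullRing (ZMod p)
  have hmemS : M.mem S := M.closed_prod (Fin n) _ (fun _ => hmemp)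
  -- finiteness
  have finR : Finite (NullRing (ZMod (p ^ n))) := inferInstanceAs (Finite (ZMod (p ^ n)))
  have finp : Finite (NullRing (ZMod p)) := inferInstanceAs (Finite (ZMod p))
  have finS : Finite S := inferInstance
  -- all products zero
  have hmulR : ∀ a b : NullRing (ZMod (p ^ n)), a * b = 0 := fun _ _ => rfl
  have hmulS : ∀ a b : S, a * b = 0 := fun _ _ => funext fun _ => rfl
  -- cardinalities
  have hcard : Nat.card (NullRing (ZMod (p ^ n))) = Nat.card S := by
    show Nat.card (ZMod (p ^ n)) = Nat.card (Fin n → ZMod p)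
    rw [Nat.card_zmod, Nat.card_fun, Nat.card_zmod, Nat.card_eq_fintype_card,
      Fintype.card_fin]
  -- graph iso, hence ring iso
  obtain ⟨e⟩ := hgd _ _ finR finS hmem hmemS (zdv_iso_of_card hmulR hmulS hcard)
  -- contradiction via additive orders
  have key : ∀ x : ZMod p, p • x = 0 := by
    intro x
    rw [nsmul_eq_mul, ZMod.natCast_self, zero_mul]
  have hpS : ∀ y : S, p • y = 0 := by
    intro y
    funext i
    exact key (y i)
  let one : NullRing (ZMod (p ^ n)) := (1 : ZMod (p ^ n))
  have h1 : p • one = 0 := by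
    have h := hpS (e one)
    rw [← map_nsmul e] at h
    exact e.injective (h.trans (map_zero e).symm)
  have h2 : (p : ZMod (p ^ n)) = 0 := by
    have h : p • (1 : ZMod (p ^ n)) = 0 := h1
    rwa [nsmul_eq_mul, mul_one] at h
  rw [ZMod.natCast_eq_zero_iff] at h2
  have := Nat.le_of_dvd hp0 h2
  have : p ^ 2 ≤ p ^ n := Nat.pow_le_pow_right hp0 hn
  nlinarith [hp.two_le, Nat.le_of_dvd hp0 h2]
end

section
/- Let 𝔐 be a graph-determined variety of rings. Then for every odd prime q, the ring N_{q²} does not belong to 𝔐. -/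
/-- The ring `N_{p²}`: the additive group `ℤ/p²ℤ` equipped with the multiplication
`x ∘ y = p·x·y`. -/
def Npsq (p : ℕ) := ZMod (p ^ 2)

namespace Npsq

/-- The identity map from `N_{p²}` to its underlying additive group `ℤ/p²ℤ`. -/
def zc {p : ℕ} (x : Npsq p) : ZMod (p ^ 2) := x

instance (p : ℕ) : NonUnitalRing (Npsq p) :=
  { (inferInstanceAs (AddCommGroup (ZMod (p ^ 2))) : AddCommGroup (ZMod (p ^ 2))) with
    mul := fun a b => ((p : ZMod (p ^ 2)) * zc a * zc b : ZMod (p ^ 2))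
    left_distrib := fun a b c => by
      show (p : ZMod (p ^ 2)) * zc a * (zc b + zc c)
          = (p : ZMod (p ^ 2)) * zc a * zc b + (p : ZMod (p ^ 2)) * zc a * zc c
      ring
    right_distrib := fun a b c => by
      show (p : ZMod (p ^ 2)) * (zc a + zc b) * zc c
          = (p : ZMod (p ^ 2)) * zc a * zc c + (p : ZMod (p ^ 2)) * zc b * zc c
      ring
    zero_mul := fun a => by
      show (p : ZMod (p ^ 2)) * (0 : ZMod (p ^ 2)) * zc a = (0 : ZMod (p ^ 2))
      ring
    mul_zero := fun a => by
      show (p : ZMod (p ^ 2)) * zc a * (0 : ZMod (p ^ 2)) = (0 : ZMod (p ^ 2))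
      ring
    mul_assoc := fun a b c => by
      show (p : ZMod (p ^ 2)) * ((p : ZMod (p ^ 2)) * zc a * zc b) * zc c
          = (p : ZMod (p ^ 2)) * zc a * ((p : ZMod (p ^ 2)) * zc b * zc c)
      ring }

end Npsq

section Aux

open ZMod

/-- projection `ZMod q² → ZMod q`. -/
noncomputable abbrev pih (q : ℕ) : ZMod (q ^ 2) →+* ZMod q :=
  ZMod.castHom (dvd_pow_self q (by norm_num)) (ZMod q)

lemma pih_eq {q : ℕ} [NeZero q] (z : ZMod (q ^ 2)) :
    pih q z = ((z.val : ℕ) : ZMod q) := by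
  haveI : NeZero (q ^ 2) := ⟨pow_ne_zero 2 (NeZero.ne q)⟩
  rw [ZMod.castHom_apply, ← ZMod.natCast_val]

lemma pih_q_eq_zero {q : ℕ} : pih q ((q : ℕ) : ZMod (q ^ 2)) = 0 := by
  rw [map_natCast, ZMod.natCast_self]

lemma qmul_rep {q : ℕ} [NeZero q] (z : ZMod (q ^ 2)) (hz : pih q z = 0) :
    ∃ t : ZMod (q ^ 2), z = ((q : ℕ) : ZMod (q ^ 2)) * t := by
  haveI : NeZero (q ^ 2) := ⟨pow_ne_zero 2 (NeZero.ne q)⟩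
  rw [pih_eq, ZMod.natCast_eq_zero_iff] at hz
  obtain ⟨m, hm⟩ := hz
  exact ⟨(m : ZMod (q ^ 2)), by rw [← ZMod.natCast_zmod_val z, hm, Nat.cast_mul]⟩

lemma qmul_eq_zero_iff {q : ℕ} [NeZero q] (z : ZMod (q ^ 2)) :
    ((q : ℕ) : ZMod (q ^ 2)) * z = 0 ↔ pih q z = 0 := by
  haveI : NeZero (q ^ 2) := ⟨pow_ne_zero 2 (NeZero.ne q)⟩
  constructor
  · intro h
    have h2 : (((q * z.val : ℕ)) : ZMod (q ^ 2)) = 0 := by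
      rw [Nat.cast_mul, ZMod.natCast_zmod_val]; exact h
    rw [ZMod.natCast_eq_zero_iff] at h2
    have h3 : q * q ∣ q * z.val := by rwa [← pow_two]
    have h4 : q ∣ z.val := (mul_dvd_mul_iff_left (NeZero.ne q)).mp h3
    rw [pih_eq]
    exact (ZMod.natCast_eq_zero_iff _ _).mpr h4
  · intro h
    obtain ⟨t, rfl⟩ := qmul_rep z h
    rw [← mul_assoc, ← Nat.cast_mul, ← pow_two, ZMod.natCast_self, zero_mul]

/-- "division by q" map `ZMod q² → ZMod q`. -/
def Dm (q : ℕ) (z : ZMod (q ^ 2)) : ZMod q := ((z.val / q : ℕ) : ZMod q)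

lemma Dm_qmul {q : ℕ} (hq1 : 1 < q) (t : ZMod (q ^ 2)) :
    Dm q (((q : ℕ) : ZMod (q ^ 2)) * t) = pih q t := by
  haveI : NeZero q := ⟨by omega⟩
  haveI : NeZero (q ^ 2) := ⟨pow_ne_zero 2 (by omega)⟩
  have hqlt : q < q ^ 2 := by nlinarith
  have hval : (((q : ℕ) : ZMod (q ^ 2)) * t).val = q * (t.val % q) := by
    rw [ZMod.val_mul, ZMod.val_natCast, Nat.mod_eq_of_lt hqlt]
    have h := Nat.mul_mod_mul_left q t.val q
    rwa [← pow_two] at h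
  rw [Dm, hval, Nat.mul_div_cancel_left _ (by omega : 0 < q), ZMod.natCast_mod,
    pih_eq]

lemma Dm_add {q : ℕ} (hq1 : 1 < q) (z w : ZMod (q ^ 2))
    (hz : pih q z = 0) (hw : pih q w = 0) :
    Dm q (z + w) = Dm q z + Dm q w := by
  haveI : NeZero q := ⟨by omega⟩
  obtain ⟨t, rfl⟩ := qmul_rep z hz
  obtain ⟨s, rfl⟩ := qmul_rep w hw
  rw [← mul_add, Dm_qmul hq1, Dm_qmul hq1, Dm_qmul hq1, map_add]

end Aux

/-- The ring `F_q ⊕ F_q` with multiplication `(a,u)(b,v) = (0, ab)`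
(isomorphic to `s·F_q[s]/(s³)`). -/
def Aring (q : ℕ) := ZMod q × ZMod q

namespace Aring

/-- identity map to the underlying product. -/
def ac {q : ℕ} (x : Aring q) : ZMod q × ZMod q := x

instance (q : ℕ) : NonUnitalRing (Aring q) :=
  { (inferInstanceAs (AddCommGroup (ZMod q × ZMod q)) : AddCommGroup (ZMod q × ZMod q)) with
    mul := fun a b => (((0 : ZMod q), (ac a).1 * (ac b).1) : ZMod q × ZMod q)
    left_distrib := fun a b c => by
      show (((0 : ZMod q), (ac a).1 * ((ac b).1 + (ac c).1)) : ZMod q × ZMod q)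
          = ((0 : ZMod q), (ac a).1 * (ac b).1) + ((0 : ZMod q), (ac a).1 * (ac c).1)
      apply Prod.ext <;> simp [mul_add]
    right_distrib := fun a b c => by
      show (((0 : ZMod q), ((ac a).1 + (ac b).1) * (ac c).1) : ZMod q × ZMod q)
          = ((0 : ZMod q), (ac a).1 * (ac c).1) + ((0 : ZMod q), (ac b).1 * (ac c).1)
      apply Prod.ext <;> simp [add_mul]
    zero_mul := fun a => by
      show (((0 : ZMod q), (0 : ZMod q) * (ac a).1) : ZMod q × ZMod q) = ((0 : ZMod q), 0)
      simp
    mul_zero := fun a => by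
      show (((0 : ZMod q), (ac a).1 * (0 : ZMod q)) : ZMod q × ZMod q) = ((0 : ZMod q), 0)
      simp
    mul_assoc := fun a b c => by
      show (((0 : ZMod q), (0 : ZMod q) * (ac c).1) : ZMod q × ZMod q)
          = ((0 : ZMod q), (ac a).1 * (0 : ZMod q))
      simp }

lemma ac_mul {q : ℕ} (x y : Aring q) :
    ac (x * y) = ((0 : ZMod q), (ac x).1 * (ac y).1) := rfl

lemma ac_add {q : ℕ} (x y : Aring q) : ac (x + y) = ac x + ac y := rfl

lemma ac_zero {q : ℕ} : ac (0 : Aring q) = 0 := rfl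

lemma ac_inj {q : ℕ} {x y : Aring q} (h : ac x = ac y) : x = y := h

lemma eq_zero_iff {q : ℕ} (x : Aring q) : x = 0 ↔ (ac x).1 = 0 ∧ (ac x).2 = 0 := by
  constructor
  · rintro rfl; exact ⟨rfl, rfl⟩
  · rintro ⟨h1, h2⟩
    exact ac_inj (Prod.ext h1 h2)

lemma mul_eq_zero_iff {q : ℕ} [Fact q.Prime] (x y : Aring q) :
    x * y = 0 ↔ (ac x).1 = 0 ∨ (ac y).1 = 0 := by
  rw [eq_zero_iff, ac_mul]
  constructor
  · rintro ⟨-, h2⟩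
    exact mul_eq_zero.mp h2
  · intro h
    refine ⟨rfl, ?_⟩
    rcases h with h | h <;> simp [h]

lemma isZD_iff {q : ℕ} [Fact q.Prime] (x : Aring q) : IsZD x ↔ x ≠ 0 := by
  constructor
  · exact fun h => h.1
  · intro hx
    refine ⟨hx, (((0 : ZMod q), (1 : ZMod q)) : ZMod q × ZMod q), ?_, Or.inl ?_⟩
    · intro h
      have := congrArg (fun z : Aring q => (ac z).2) h
      simp only [ac_zero] at this
      exact one_ne_zero this
    · apply ac_inj
      show ((0 : ZMod q), (ac x).1 * (0 : ZMod q)) = (0, 0)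
      simp

lemma nsmul_eq_zero {q : ℕ} (x : Aring q) : q • x = 0 := by
  apply ac_inj
  have : ac (q • x) = q • ac x := rfl
  rw [this, ac_zero]
  apply Prod.ext <;>
    simp [nsmul_eq_mul, ZMod.natCast_self]

end Aring

namespace Npsq

lemma zc_mul {q : ℕ} (x y : Npsq q) :
    zc (x * y) = ((q : ℕ) : ZMod (q ^ 2)) * zc x * zc y := rfl

lemma zc_add {q : ℕ} (x y : Npsq q) : zc (x + y) = zc x + zc y := rfl

lemma zc_neg {q : ℕ} (x : Npsq q) : zc (-x) = -zc x := rfl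

lemma zc_zero {q : ℕ} : zc (0 : Npsq q) = 0 := rfl

lemma zc_inj {q : ℕ} {x y : Npsq q} (h : zc x = zc y) : x = y := h

lemma mul_eq_zero_iff {q : ℕ} [NeZero q] [Fact q.Prime] (x y : Npsq q) :
    x * y = 0 ↔ pih q (zc x) = 0 ∨ pih q (zc y) = 0 := by
  have h1 : x * y = 0 ↔ zc (x * y) = 0 := ⟨fun h => by rw [h, zc_zero], fun h => zc_inj h⟩
  rw [h1, zc_mul, mul_assoc, qmul_eq_zero_iff, map_mul, mul_eq_zero]

lemma isZD_iff {q : ℕ} [NeZero q] (hq1 : 1 < q) (x : Npsq q) : IsZD x ↔ x ≠ 0 := by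
  haveI : NeZero (q ^ 2) := ⟨pow_ne_zero 2 (NeZero.ne q)⟩
  constructor
  · exact fun h => h.1
  · intro hx
    refine ⟨hx, (((q : ℕ) : ZMod (q ^ 2)) : Npsq q), ?_, Or.inl ?_⟩
    · intro h
      have h2 : ((q : ℕ) : ZMod (q ^ 2)) = 0 := h
      rw [ZMod.natCast_eq_zero_iff] at h2
      have := Nat.le_of_dvd (by omega) h2
      nlinarith
    · apply zc_inj
      show ((q : ℕ) : ZMod (q ^ 2)) * zc x * zc ((((q : ℕ) : ZMod (q ^ 2)) : Npsq q)) = 0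
      have : zc ((((q : ℕ) : ZMod (q ^ 2)) : Npsq q)) = ((q : ℕ) : ZMod (q ^ 2)) := rfl
      rw [this, mul_assoc, mul_comm (zc x), ← mul_assoc, ← Nat.cast_mul, ← pow_two,
        ZMod.natCast_self, zero_mul]

end Npsq

/-- the digit bijection `ZMod q² ≃ ZMod q × ZMod q`. -/
def phiE (q : ℕ) (hq1 : 1 < q) : Npsq q ≃ Aring q :=
  haveI : NeZero q := ⟨by omega⟩
  haveI : NeZero (q ^ 2) := ⟨pow_ne_zero 2 (by omega)⟩
  { toFun := fun z => ((((Npsq.zc z).val : ℕ) : ZMod q), Dm q (Npsq.zc z))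
    invFun := fun p => ((((Aring.ac p).1.val + q * (Aring.ac p).2.val : ℕ) : ZMod (q ^ 2)) : Npsq q)
    left_inv := by
      intro z
      apply Npsq.zc_inj
      set v := (Npsq.zc z).val with hv
      have hvlt : v < q ^ 2 := ZMod.val_lt _
      have h1 : ((v : ZMod q)).val = v % q := ZMod.val_natCast q v
      have h2 : (Dm q (Npsq.zc z)).val = v / q := by
        rw [Dm, ZMod.val_natCast]
        have : v / q < q := by
          rw [Nat.div_lt_iff_lt_mul (by omega : 0 < q)]
          have : q ^ 2 = q * q := pow_two q
          omega
        exact Nat.mod_eq_of_lt this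
      show ((((v : ZMod q)).val + q * (Dm q (Npsq.zc z)).val : ℕ) : ZMod (q ^ 2)) = Npsq.zc z
      rw [h1, h2, Nat.mod_add_div, hv, ZMod.natCast_zmod_val]
    right_inv := by
      intro p
      have ha : (Aring.ac p).1.val < q := ZMod.val_lt _
      have hb : (Aring.ac p).2.val < q := ZMod.val_lt _
      let n := (Aring.ac p).1.val + q * (Aring.ac p).2.val
      have hn : n = (Aring.ac p).1.val + q * (Aring.ac p).2.val := rfl
      have hnlt : n < q ^ 2 := by
        have hmul : q * ((Aring.ac p).2.val + 1) ≤ q * q := Nat.mul_le_mul_left q (by omega)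
        have hsq : q ^ 2 = q * q := pow_two q
        have hexp : q * ((Aring.ac p).2.val + 1) = q * (Aring.ac p).2.val + q := by ring
        rw [hn, hsq]
        omega
      have hval : ((n : ZMod (q ^ 2))).val = n := ZMod.val_natCast_of_lt hnlt
      apply Aring.ac_inj
      apply Prod.ext
      · show ((((n : ZMod (q ^ 2))).val : ℕ) : ZMod q) = (Aring.ac p).1
        rw [hval, hn]
        push_cast
        simp [ZMod.natCast_self, ZMod.natCast_zmod_val]
      · show Dm q ((n : ZMod (q ^ 2))) = (Aring.ac p).2
        rw [Dm, hval, hn, mul_comm q, Nat.add_mul_div_right _ _ (by omega : 0 < q),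
          Nat.div_eq_of_lt ha, zero_add, ZMod.natCast_zmod_val] }

lemma phiE_zero {q : ℕ} (hq1 : 1 < q) : phiE q hq1 (0 : Npsq q) = 0 := by
  apply Aring.ac_inj
  have : Aring.ac (phiE q hq1 (0 : Npsq q))
      = ((((Npsq.zc (0 : Npsq q)).val : ℕ) : ZMod q), Dm q (Npsq.zc (0 : Npsq q))) := rfl
  rw [this, Aring.ac_zero]
  apply Prod.ext <;> simp [Npsq.zc_zero, Dm, ZMod.val_zero]

lemma phiE_fst {q : ℕ} [NeZero q] (hq1 : 1 < q) (z : Npsq q) :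
    (Aring.ac (phiE q hq1 z)).1 = pih q (Npsq.zc z) := by
  rw [pih_eq]; rfl

/-- The subring of `N_{q²} × N_{q²}` (as functions from `Bool`) of pairs whose
coordinates sum to a multiple of `q`. -/
def Csub (q : ℕ) : NonUnitalSubring (Bool → Npsq q) where
  carrier := {f | pih q (Npsq.zc (f true) + Npsq.zc (f false)) = 0}
  zero_mem' := by
    show pih q (Npsq.zc (0 : Npsq q) + Npsq.zc (0 : Npsq q)) = 0
    rw [Npsq.zc_zero]; simp
  add_mem' := by
    intro f g hf hg
    show pih q (Npsq.zc (f true + g true) + Npsq.zc (f false + g false)) = 0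
    rw [Npsq.zc_add, Npsq.zc_add]
    have h : (Npsq.zc (f true) + Npsq.zc (g true)) + (Npsq.zc (f false) + Npsq.zc (g false))
        = (Npsq.zc (f true) + Npsq.zc (f false)) + (Npsq.zc (g true) + Npsq.zc (g false)) := by
      ring
    rw [h, map_add]
    rw [hf, hg, add_zero]
  neg_mem' := by
    intro f hf
    show pih q (Npsq.zc (-(f true)) + Npsq.zc (-(f false))) = 0
    rw [Npsq.zc_neg, Npsq.zc_neg, ← neg_add, map_neg]
    rw [hf, neg_zero]
  mul_mem' := by
    intro f g _ _
    show pih q (Npsq.zc (f true * g true) + Npsq.zc (f false * g false)) = 0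
    rw [Npsq.zc_mul, Npsq.zc_mul, map_add, map_mul, map_mul, map_mul, map_mul,
      pih_q_eq_zero, zero_mul, zero_mul, zero_mul, zero_mul, add_zero]

lemma mem_Csub {q : ℕ} (f : ↥(Csub q)) :
    pih q (Npsq.zc ((f : Bool → Npsq q) true) + Npsq.zc ((f : Bool → Npsq q) false)) = 0 :=
  f.2

/-- The quotient-like map from `Csub q` onto `Aring q`. -/
noncomputable def psiFun (q : ℕ) (f : ↥(Csub q)) : Aring q :=
  ((pih q (Npsq.zc ((f : Bool → Npsq q) true)),
    (2 : ZMod q)⁻¹ * Dm q (Npsq.zc ((f : Bool → Npsq q) true)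
      + Npsq.zc ((f : Bool → Npsq q) false))) : ZMod q × ZMod q)

lemma psiFun_mul {q : ℕ} [NeZero q] (hq1 : 1 < q)
    (hhalf : ∀ x : ZMod q, (2 : ZMod q)⁻¹ * (2 * x) = x) (f g : ↥(Csub q)) :
    psiFun q (f * g) = psiFun q f * psiFun q g := by
  have hct : ((↑(f * g) : Bool → Npsq q) true)
      = (↑f : Bool → Npsq q) true * (↑g : Bool → Npsq q) true := rfl
  have hcf : ((↑(f * g) : Bool → Npsq q) false)
      = (↑f : Bool → Npsq q) false * (↑g : Bool → Npsq q) false := rfl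
  set a := Npsq.zc ((↑f : Bool → Npsq q) true) with ha
  set a' := Npsq.zc ((↑f : Bool → Npsq q) false) with ha'
  set b := Npsq.zc ((↑g : Bool → Npsq q) true) with hb
  set b' := Npsq.zc ((↑g : Bool → Npsq q) false) with hb'
  have hf : pih q a' = - pih q a := by
    have := mem_Csub f
    rw [map_add] at this
    rw [ha', ha]
    linear_combination this
  have hg : pih q b' = - pih q b := by
    have := mem_Csub g
    rw [map_add] at this
    rw [hb', hb]
    linear_combination this
  apply Aring.ac_inj
  rw [Aring.ac_mul]
  apply Prod.ext
  · show pih q (Npsq.zc ((↑(f * g) : Bool → Npsq q) true)) = 0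
    rw [hct, Npsq.zc_mul, map_mul, map_mul, pih_q_eq_zero, zero_mul, zero_mul]
  · show (2 : ZMod q)⁻¹ * Dm q (Npsq.zc ((↑(f * g) : Bool → Npsq q) true)
        + Npsq.zc ((↑(f * g) : Bool → Npsq q) false)) = pih q a * pih q b
    rw [hct, hcf, Npsq.zc_mul, Npsq.zc_mul, ← ha, ← ha', ← hb, ← hb']
    have hre : ((q : ℕ) : ZMod (q ^ 2)) * a * b + ((q : ℕ) : ZMod (q ^ 2)) * a' * b'
        = ((q : ℕ) : ZMod (q ^ 2)) * (a * b + a' * b') := by ring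
    rw [hre, Dm_qmul hq1, map_add, map_mul, map_mul, hf, hg]
    have : pih q a * pih q b + -pih q a * -pih q b = 2 * (pih q a * pih q b) := by ring
    rw [this, hhalf]

lemma psiFun_zero {q : ℕ} : psiFun q (0 : ↥(Csub q)) = 0 := by
  apply Aring.ac_inj
  have hz : ((↑(0 : ↥(Csub q)) : Bool → Npsq q) true) = 0 := rfl
  have hz' : ((↑(0 : ↥(Csub q)) : Bool → Npsq q) false) = 0 := rfl
  rw [Aring.ac_zero]
  apply Prod.ext
  · show pih q (Npsq.zc ((↑(0 : ↥(Csub q)) : Bool → Npsq q) true)) = 0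
    rw [hz, Npsq.zc_zero, map_zero]
  · show (2 : ZMod q)⁻¹ * Dm q (Npsq.zc ((↑(0 : ↥(Csub q)) : Bool → Npsq q) true)
        + Npsq.zc ((↑(0 : ↥(Csub q)) : Bool → Npsq q) false)) = 0
    rw [hz, hz', Npsq.zc_zero, add_zero]
    have : Dm q (0 : ZMod (q ^ 2)) = 0 := by
      rw [Dm, ZMod.val_zero, Nat.zero_div, Nat.cast_zero]
    rw [this, mul_zero]

lemma psiFun_add {q : ℕ} (hq1 : 1 < q) (f g : ↥(Csub q)) :
    psiFun q (f + g) = psiFun q f + psiFun q g := by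
  have hct : ((↑(f + g) : Bool → Npsq q) true)
      = (↑f : Bool → Npsq q) true + (↑g : Bool → Npsq q) true := rfl
  have hcf : ((↑(f + g) : Bool → Npsq q) false)
      = (↑f : Bool → Npsq q) false + (↑g : Bool → Npsq q) false := rfl
  apply Aring.ac_inj
  rw [Aring.ac_add]
  apply Prod.ext
  · show pih q (Npsq.zc ((↑(f + g) : Bool → Npsq q) true)) = _
    rw [hct, Npsq.zc_add, map_add]
    rfl
  · show (2 : ZMod q)⁻¹ * Dm q (Npsq.zc ((↑(f + g) : Bool → Npsq q) true)
        + Npsq.zc ((↑(f + g) : Bool → Npsq q) false)) = _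
    rw [hct, hcf, Npsq.zc_add, Npsq.zc_add]
    have hre : (Npsq.zc ((↑f : Bool → Npsq q) true) + Npsq.zc ((↑g : Bool → Npsq q) true))
          + (Npsq.zc ((↑f : Bool → Npsq q) false) + Npsq.zc ((↑g : Bool → Npsq q) false))
        = (Npsq.zc ((↑f : Bool → Npsq q) true) + Npsq.zc ((↑f : Bool → Npsq q) false))
          + (Npsq.zc ((↑g : Bool → Npsq q) true) + Npsq.zc ((↑g : Bool → Npsq q) false)) := by
      ring
    rw [hre, Dm_add hq1 _ _ (mem_Csub f) (mem_Csub g), mul_add]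
    rfl

lemma psiFun_surj {q : ℕ} [NeZero q] (hq1 : 1 < q)
    (hhalf : ∀ x : ZMod q, (2 : ZMod q)⁻¹ * (2 * x) = x) :
    Function.Surjective (psiFun q) := by
  haveI : NeZero (q ^ 2) := ⟨pow_ne_zero 2 (NeZero.ne q)⟩
  intro z
  set a := (Aring.ac z).1 with hA
  set b := (Aring.ac z).2 with hB
  set c : ZMod (q ^ 2) := (((2 * b).val : ℕ) : ZMod (q ^ 2)) with hc
  set x : ZMod (q ^ 2) := ((a.val : ℕ) : ZMod (q ^ 2)) with hx
  set f0 : Bool → Npsq q :=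
    fun i => if i then (x : Npsq q)
      else ((-x + ((q : ℕ) : ZMod (q ^ 2)) * c : ZMod (q ^ 2)) : Npsq q) with hf0
  have ht : Npsq.zc (f0 true) = x := rfl
  have hfalse : Npsq.zc (f0 false) = -x + ((q : ℕ) : ZMod (q ^ 2)) * c := rfl
  have hsum : Npsq.zc (f0 true) + Npsq.zc (f0 false) = ((q : ℕ) : ZMod (q ^ 2)) * c := by
    rw [ht, hfalse]; ring
  have hmem : f0 ∈ Csub q := by
    show pih q (Npsq.zc (f0 true) + Npsq.zc (f0 false)) = 0
    rw [hsum, map_mul, pih_q_eq_zero, zero_mul]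
  refine ⟨⟨f0, hmem⟩, ?_⟩
  apply Aring.ac_inj
  show ((pih q (Npsq.zc (f0 true)),
    (2 : ZMod q)⁻¹ * Dm q (Npsq.zc (f0 true) + Npsq.zc (f0 false))) : ZMod q × ZMod q)
      = Aring.ac z
  have h1 : pih q (Npsq.zc (f0 true)) = a := by
    rw [ht, hx, map_natCast, ZMod.natCast_zmod_val]
  have h2 : (2 : ZMod q)⁻¹ * Dm q (Npsq.zc (f0 true) + Npsq.zc (f0 false)) = b := by
    have hlt : (2 * b).val < q ^ 2 := by
      have h3 : (2 * b).val < q := ZMod.val_lt _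
      have h4 : q < q ^ 2 := by nlinarith
      omega
    rw [hsum, Dm_qmul hq1, hc, pih_eq, ZMod.val_natCast, Nat.mod_eq_of_lt hlt,
      ZMod.natCast_zmod_val, hhalf]
  rw [h1, h2]

lemma exists_psi (q : ℕ) (hq : q.Prime) (hodd : Odd q) :
    ∃ ψ : ↥(Csub q) →ₙ+* Aring q, Function.Surjective ψ := by
  haveI : Fact q.Prime := ⟨hq⟩
  haveI : NeZero q := ⟨hq.ne_zero⟩
  have hq1 : 1 < q := hq.one_lt
  have h2ne : (2 : ZMod q) ≠ 0 := by
    intro h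
    rw [show (2 : ZMod q) = ((2 : ℕ) : ZMod q) by norm_cast] at h
    rw [ZMod.natCast_eq_zero_iff] at h
    have h2 := Nat.le_of_dvd (by norm_num) h
    have h3 : q = 2 := by omega
    rw [h3, Nat.odd_iff] at hodd
    norm_num at hodd
  have hhalf : ∀ x : ZMod q, (2 : ZMod q)⁻¹ * (2 * x) = x := by
    intro x
    rw [← mul_assoc, inv_mul_cancel₀ h2ne, one_mul]
  exact ⟨{ toFun := psiFun q
           map_mul' := psiFun_mul hq1 hhalf
           map_zero' := psiFun_zero
           map_add' := psiFun_add hq1 }, psiFun_surj hq1 hhalf⟩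

lemma graph_iso (q : ℕ) (hq : q.Prime) :
    Nonempty (zdvGraph (Npsq q) ≃g zdvGraph (Aring q)) := by
  haveI : Fact q.Prime := ⟨hq⟩
  haveI : NeZero q := ⟨hq.ne_zero⟩
  have hq1 : 1 < q := hq.one_lt
  have hzero : ∀ z : Npsq q, phiE q hq1 z = 0 ↔ z = 0 := by
    intro z
    constructor
    · intro h
      exact (phiE q hq1).injective (h.trans (phiE_zero hq1).symm)
    · rintro rfl
      exact phiE_zero hq1
  have hIsZD : ∀ z : Npsq q, IsZD z ↔ IsZD (phiE q hq1 z) := by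
    intro z
    rw [Npsq.isZD_iff hq1, Aring.isZD_iff]
    exact not_congr (hzero z).symm
  refine ⟨⟨Equiv.subtypeEquiv (phiE q hq1) hIsZD, ?_⟩⟩
  intro u v
  set e := Equiv.subtypeEquiv (phiE q hq1) hIsZD with he
  have hcoe : ∀ w : {x : Npsq q // IsZD x},
      ((e w : {y : Aring q // IsZD y}) : Aring q) = phiE q hq1 (w : Npsq q) := fun _ => rfl
  constructor
  · rintro ⟨h1, h2⟩
    refine ⟨fun hz => h1 (by rw [hz]), ?_⟩
    rw [hcoe u, hcoe v, Aring.mul_eq_zero_iff, Aring.mul_eq_zero_iff,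
      phiE_fst hq1, phiE_fst hq1] at h2
    rw [Npsq.mul_eq_zero_iff, Npsq.mul_eq_zero_iff]
    tauto
  · rintro ⟨h1, h2⟩
    refine ⟨fun hz => h1 (e.injective hz), ?_⟩
    rw [Npsq.mul_eq_zero_iff, Npsq.mul_eq_zero_iff] at h2
    rw [hcoe u, hcoe v, Aring.mul_eq_zero_iff, Aring.mul_eq_zero_iff,
      phiE_fst hq1, phiE_fst hq1]
    tauto

/-- If `𝔐` is a graph-determined variety, then for every odd prime `q` the ring
`N_{q²}` does not belong to `𝔐`. -/
theorem Npsq_not_mem_graphDetermined (M : RingVariety) (hgd : GraphDetermined M)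
    (q : ℕ) (hq : q.Prime) (hodd : Odd q) :
    ¬ M.mem (Npsq q) := by
  intro hmem
  haveI : Fact q.Prime := ⟨hq⟩
  haveI : NeZero q := ⟨hq.ne_zero⟩
  haveI : NeZero (q ^ 2) := ⟨pow_ne_zero 2 hq.ne_zero⟩
  have hq1 : 1 < q := hq.one_lt
  have h1 : M.mem (Bool → Npsq q) := M.closed_prod Bool (fun _ => Npsq q) (fun _ => hmem)
  have h2 : M.mem ↥(Csub q) := M.closed_subring _ (Csub q) h1
  obtain ⟨ψ, hψ⟩ := exists_psi q hq hodd
  have h3 : M.mem (Aring q) := M.closed_image _ _ ψ hψ h2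
  haveI : Finite (Npsq q) := inferInstanceAs (Finite (ZMod (q ^ 2)))
  haveI : Finite (Aring q) := inferInstanceAs (Finite (ZMod q × ZMod q))
  obtain ⟨e⟩ := hgd (Npsq q) (Aring q) ‹_› ‹_› hmem h3 (graph_iso q hq)
  set z1 : Npsq q := ((1 : ZMod (q ^ 2)) : Npsq q) with hz1
  have hsm : e (q • z1) = q • e z1 := map_nsmul e q z1
  have hz : q • e z1 = 0 := Aring.nsmul_eq_zero _
  have h0 : e (q • z1) = e 0 := by rw [hsm, hz, map_zero]
  have h4 : q • z1 = 0 := e.injective h0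
  have h5 : Npsq.zc (q • z1) = ((q : ℕ) : ZMod (q ^ 2)) := by
    have : Npsq.zc (q • z1) = q • (1 : ZMod (q ^ 2)) := rfl
    rw [this, nsmul_eq_mul, mul_one]
  rw [h4, Npsq.zc_zero] at h5
  have h6 : q ^ 2 ∣ q := by
    rwa [eq_comm, ZMod.natCast_eq_zero_iff] at h5
  have h7 := Nat.le_of_dvd (by omega) h6
  nlinarith
end

section
/- Let 𝔐 be a graph-determined variety of rings. Then there exists a positive integer m of the form m = q₁^{β₁} q₂^{β₂} ⋯ q_t^{β_t}, where q₁, …, q_t are pairwise distinct primes and βᵢ ≤ 3 for all i ≤ t (equivalently, m is not divisible by the fourth power of any prime), such that every ring R ∈ 𝔐 satisfies m·x = 0 for all x ∈ R. -/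
section PW
variable {R : Type*} [NonUnitalRing R]

/-- Non-unital power: `pw y k = y^k` for `k ≥ 1`, and `pw y 0 = 0`. -/
def pw (y : R) : ℕ → R
  | 0 => 0
  | 1 => y
  | (k+2) => pw y (k+1) * y

@[simp] lemma pw_zero (y : R) : pw y 0 = 0 := rfl
@[simp] lemma pw_one (y : R) : pw y 1 = y := rfl

lemma pw_succ (y : R) {k : ℕ} (hk : 1 ≤ k) : pw y (k+1) = pw y k * y := by
  match k, hk with
  | (k+1), _ => rfl

lemma zsmul_mul (c : ℤ) (u v : R) : (c • u) * v = c • (u * v) :=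
  map_zsmul (AddMonoidHom.mulRight v) c u

lemma mul_zsmul'' (c : ℤ) (u v : R) : u * (c • v) = c • (u * v) :=
  map_zsmul (AddMonoidHom.mulLeft u) c v

lemma nsmul_mul (c : ℕ) (u v : R) : (c • u) * v = c • (u * v) :=
  map_nsmul (AddMonoidHom.mulRight v) c u

lemma mul_nsmul'' (c : ℕ) (u v : R) : u * (c • v) = c • (u * v) :=
  map_nsmul (AddMonoidHom.mulLeft u) c v

lemma zsmul_mul_zsmul (a b : ℤ) (u v : R) : (a • u) * (b • v) = (a * b) • (u * v) := by
  rw [zsmul_mul, mul_zsmul'', smul_smul]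

lemma pw_add (y : R) : ∀ {j k : ℕ}, 1 ≤ j → 1 ≤ k → pw y (j + k) = pw y j * pw y k := by
  intro j k hj hk
  induction k, hk using Nat.le_induction with
  | base => rw [pw_succ y hj, pw_one]
  | succ k hk ih =>
      rw [show j + (k+1) = (j+k) + 1 from rfl, pw_succ y (le_trans hj (Nat.le_add_right _ _)),
        ih, pw_succ y hk, mul_assoc]

lemma pw_zsmul (c : ℤ) (y : R) : ∀ k : ℕ, pw (c • y) k = c ^ k • pw y k
  | 0 => by simp
  | 1 => by simp
  | (k+2) => by
      have h1 : (1:ℕ) ≤ k + 1 := Nat.le_add_left 1 k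
      rw [pw_succ _ (by omega : (1:ℕ) ≤ k+1), pw_zsmul c y (k+1),
        pw_succ y (by omega : (1:ℕ) ≤ k+1), zsmul_mul_zsmul, ← pow_succ]

/-- Evaluation of an integer polynomial (ignoring its constant term) in a
non-unital ring. -/
noncomputable def evalP (p : Polynomial ℤ) (y : R) : R := p.sum fun k a => a • pw y k

lemma evalP_add (y : R) (p q : Polynomial ℤ) :
    evalP (p + q) y = evalP p y + evalP q y :=
  Polynomial.sum_add_index p q _ (fun _ => zero_smul ℤ _) (fun _ _ _ => add_smul _ _ _)

/-- `evalP` as an additive monoid hom in the polynomial. -/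
noncomputable def evalPHom (y : R) : Polynomial ℤ →+ R :=
  AddMonoidHom.mk' (fun p => evalP p y) (fun p q => evalP_add y p q)

@[simp] lemma evalPHom_apply (y : R) (p : Polynomial ℤ) : evalPHom y p = evalP p y := rfl

@[simp] lemma evalP_zero (y : R) : evalP (0 : Polynomial ℤ) y = 0 :=
  map_zero (evalPHom y)

lemma evalP_monomial (y : R) (k : ℕ) (a : ℤ) :
    evalP (Polynomial.monomial k a) y = a • pw y k :=
  Polynomial.sum_monomial_index a _ (zero_smul ℤ _)

@[simp] lemma evalP_X (y : R) : evalP (Polynomial.X : Polynomial ℤ) y = y := by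
  rw [← Polynomial.monomial_one_one_eq_X, evalP_monomial]; simp

lemma evalP_smul (c : ℤ) (p : Polynomial ℤ) (y : R) :
    evalP (c • p) y = c • evalP p y := by
  have h := Polynomial.sum_smul_index p c (fun k a => a • pw y k)
    (fun i => zero_smul ℤ (pw y i))
  rw [evalP, h, evalP, Polynomial.sum_def, Polynomial.sum_def, Finset.smul_sum]
  exact Finset.sum_congr rfl fun k _ => mul_smul c _ _

lemma evalP_sub (y : R) (p q : Polynomial ℤ) :
    evalP (p - q) y = evalP p y - evalP q y :=
  map_sub (evalPHom y) p q

lemma evalP_mul (y : R) {p q : Polynomial ℤ} (hp : p.coeff 0 = 0) (hq : q.coeff 0 = 0) :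
    evalP (p * q) y = evalP p y * evalP q y := by
  have hsupp : ∀ {r : Polynomial ℤ}, r.coeff 0 = 0 → ∀ {i : ℕ}, i ∈ r.support → 1 ≤ i := by
    intro r hr i hi
    rcases Nat.eq_zero_or_pos i with h | h
    · subst h; exact absurd hr (Polynomial.mem_support_iff.mp hi)
    · exact h
  conv_lhs => rw [p.as_sum_support, q.as_sum_support]
  rw [Finset.sum_mul_sum, ← evalPHom_apply, map_sum]
  conv_rhs => rw [evalP, evalP, Polynomial.sum_def, Polynomial.sum_def, Finset.sum_mul_sum]
  refine Finset.sum_congr rfl fun i hi => ?_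
  rw [map_sum]
  refine Finset.sum_congr rfl fun j hj => ?_
  rw [evalPHom_apply, Polynomial.monomial_mul_monomial, evalP_monomial,
    pw_add y (hsupp hp hi) (hsupp hq hj), zsmul_mul_zsmul]

end PW

section ClaimL
open Polynomial

/-- The polynomial with `k`-th coefficient `2^k * p.coeff k`, i.e. "`p(2X)`". -/
noncomputable def scale2 (p : Polynomial ℤ) : Polynomial ℤ :=
  p.sum fun k a => Polynomial.monomial k (2 ^ k * a)

lemma coeff_scale2 (p : Polynomial ℤ) (n : ℕ) : (scale2 p).coeff n = 2 ^ n * p.coeff n := by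
  rw [scale2, Polynomial.sum_def, Polynomial.finset_sum_coeff]
  by_cases hn : n ∈ p.support
  · rw [Finset.sum_eq_single n (fun k _ hkn => by rw [coeff_monomial, if_neg hkn])
      (fun h => absurd hn h), coeff_monomial, if_pos rfl]
  · rw [Polynomial.notMem_support_iff.mp hn, mul_zero]
    exact Finset.sum_eq_zero fun k hk => by
      rw [coeff_monomial, if_neg (fun h : k = n => hn (h ▸ hk))]

lemma evalP_scale2 {R : Type*} [NonUnitalRing R] (y : R) (p : Polynomial ℤ) :
    evalP (scale2 p) y = evalP p ((2:ℤ) • y) := by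
  rw [scale2, Polynomial.sum_def, ← evalPHom_apply, map_sum]
  rw [show evalP p ((2:ℤ) • y) = p.sum fun k a => a • pw ((2:ℤ) • y) k from rfl,
    Polynomial.sum_def]
  refine Finset.sum_congr rfl fun k _ => ?_
  rw [evalPHom_apply, evalP_monomial, pw_zsmul, smul_smul, mul_comm]

lemma claimL_base (M : RingVariety) (p : Polynomial ℤ) (hd : p.natDegree ≤ 1)
    (h0 : p.coeff 0 = 0) (h1 : p.coeff 1 ≠ 0)
    (hid : ∀ (R : Type) (inst : NonUnitalRing R), M.mem R → ∀ y : R, evalP p y = 0) :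
    ∃ m : ℕ, 0 < m ∧ ∀ (R : Type) (inst : NonUnitalRing R), M.mem R → ∀ x : R, m • x = 0 := by
  set c := p.coeff 1 with hc
  have hp : p = c • (X : Polynomial ℤ) := by
    rw [smul_eq_C_mul]
    conv_lhs => rw [eq_X_add_C_of_natDegree_le_one hd]
    rw [h0]; simp; rfl
  refine ⟨c.natAbs, Int.natAbs_pos.mpr h1, ?_⟩
  intro R inst hR x
  have hcx : c • x = 0 := by
    have := hid R inst hR x
    rwa [hp, evalP_smul, evalP_X] at this
  have : (c.natAbs : ℤ) • x = 0 := by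
    rcases Int.natAbs_eq c with h | h
    · rw [← h, hcx]
    · rw [← neg_neg ((c.natAbs : ℤ)), ← h, neg_smul, hcx, neg_zero]
  rwa [natCast_zsmul] at this

theorem claimL (M : RingVariety) :
    ∀ (d : ℕ) (p : Polynomial ℤ), p.natDegree ≤ d → p.coeff 0 = 0 → p.coeff 1 ≠ 0 →
    (∀ (R : Type) (inst : NonUnitalRing R), M.mem R → ∀ y : R, evalP p y = 0) →
    ∃ m : ℕ, 0 < m ∧ ∀ (R : Type) (inst : NonUnitalRing R), M.mem R → ∀ x : R, m • x = 0 := by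
  intro d
  induction d with
  | zero =>
      intro p hd h0 h1 hid
      exact claimL_base M p (le_trans hd (by norm_num)) h0 h1 hid
  | succ d ih =>
      intro p hd h0 h1 hid
      by_cases hdeg : p.natDegree ≤ 1
      · exact claimL_base M p hdeg h0 h1 hid
      push_neg at hdeg
      set n := p.natDegree with hn
      have hn2 : 2 ≤ n := hdeg
      set p' : Polynomial ℤ := ((2:ℤ)^n) • p - scale2 p with hp'
      have hcoeff : ∀ k, p'.coeff k = (2^n - 2^k) * p.coeff k := by
        intro k
        rw [hp', Polynomial.coeff_sub, Polynomial.coeff_smul, coeff_scale2, smul_eq_mul,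
          sub_mul]
      have h2lt : (2:ℤ)^1 < 2^n := by
        exact pow_lt_pow_right₀ (by norm_num) hn2
      have h1' : p'.coeff 1 ≠ 0 := by
        rw [hcoeff]
        exact mul_ne_zero (by rw [pow_one] at h2lt ⊢; omega) h1
      have hp'ne : p' ≠ 0 := fun h => h1' (by rw [h, Polynomial.coeff_zero])
      have hdeg' : p'.natDegree < n := by
        rw [natDegree_lt_iff_degree_lt hp'ne, Polynomial.degree_lt_iff_coeff_zero]
        intro m hm
        rw [hcoeff]
        rcases eq_or_lt_of_le hm with h | h
        · rw [← h, sub_self, zero_mul]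
        · rw [Polynomial.coeff_eq_zero_of_natDegree_lt h, mul_zero]
      have h0' : p'.coeff 0 = 0 := by rw [hcoeff, h0, mul_zero]
      have hid' : ∀ (R : Type) (inst : NonUnitalRing R), M.mem R → ∀ y : R, evalP p' y = 0 := by
        intro R inst hR y
        rw [hp', evalP_sub, evalP_smul, evalP_scale2, hid R inst hR y,
          hid R inst hR ((2:ℤ) • y), smul_zero, sub_zero]
      exact ih p' (by omega) h0' h1' hid'

end ClaimL

section NullConstruction

lemma nullring_mul {A : Type*} [AddCommGroup A] (x y : NullRing A) : x * y = 0 := rfl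

theorem mem_nullring_zmod (M : RingVariety) (R : Type) (inst : NonUnitalRing R)
    (hR : M.mem R) (z : R) (hz : z * z = 0) :
    M.mem (NullRing (ZMod (addOrderOf z))) := by
  set n := addOrderOf z with hn
  have hmulmem : ∀ x ∈ AddSubgroup.zmultiples z, ∀ y ∈ AddSubgroup.zmultiples z,
      x * y = 0 := by
    rintro x hx y hy
    obtain ⟨a, ha⟩ := AddSubgroup.mem_zmultiples_iff.mp hx
    obtain ⟨b, hb⟩ := AddSubgroup.mem_zmultiples_iff.mp hy
    rw [← ha, ← hb, zsmul_mul_zsmul, hz, smul_zero]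
  set S : NonUnitalSubring R :=
    { AddSubgroup.zmultiples z with
      mul_mem' := fun {x y} hx hy => by
        have h0 := hmulmem x hx y hy
        exact h0 ▸ (AddSubgroup.zmultiples z).zero_mem } with hS
  have hSmem : M.mem S := M.closed_subring R S hR
  have hmemS : ∀ s : S, (s : R) ∈ AddSubgroup.zmultiples z := fun s => s.2
  have hrep : ∀ s : S, ∃ a : ℤ, a • z = (s : R) :=
    fun s => AddSubgroup.mem_zmultiples_iff.mp (hmemS s)
  choose c hc using hrep
  have key : ∀ m : ℤ, m • z = 0 → ((m : ZMod n) = 0) := by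
    intro m hm
    rw [ZMod.intCast_zmod_eq_zero_iff_dvd]
    exact addOrderOf_dvd_iff_zsmul_eq_zero.mpr hm
  have hzmem : z ∈ AddSubgroup.zmultiples z := AddSubgroup.mem_zmultiples z
  let φ : S →ₙ+* NullRing (ZMod n) :=
    { toFun := fun s => ((c s : ℤ) : ZMod n)
      map_zero' := by
        have h : c 0 • z = 0 := by
          rw [hc]; exact ZeroMemClass.coe_zero S
        exact key _ h
      map_add' := by
        intro a b
        have h : (c (a + b) - (c a + c b)) • z = 0 := by
          rw [sub_smul, add_smul, hc, hc, hc, AddMemClass.coe_add, sub_self]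
        have h2 := key _ h
        rw [Int.cast_sub, Int.cast_add, sub_eq_zero] at h2
        exact h2
      map_mul' := by
        intro a b
        have h : c (a * b) • z = 0 := by
          rw [hc, MulMemClass.coe_mul]
          exact hmulmem _ (hmemS a) _ (hmemS b)
        exact key _ h }
  have hsurj : Function.Surjective φ := by
    intro t
    obtain ⟨j, hj⟩ := ZMod.intCast_surjective (show ZMod n from t)
    refine ⟨⟨j • z, AddSubgroup.zsmul_mem _ hzmem j⟩, ?_⟩
    have h : (c ⟨j • z, AddSubgroup.zsmul_mem _ hzmem j⟩ - j) • z = 0 := by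
      rw [sub_smul, hc, sub_eq_zero]
    have h2 := key _ h
    rw [Int.cast_sub, sub_eq_zero] at h2
    show ((c _ : ℤ) : ZMod n) = t
    rw [h2]
    exact hj
  exact M.closed_image S (NullRing (ZMod n)) φ hsurj hSmem

end NullConstruction

section Endgame

theorem endgame (M : RingVariety) (hgd : GraphDetermined M) (q : ℕ) (hq : q.Prime)
    (h2 : M.mem (NullRing (ZMod (q ^ 2)))) (h1 : M.mem (NullRing (ZMod q))) : False := by
  classical
  haveI : NeZero q := ⟨hq.ne_zero⟩
  haveI : NeZero (q ^ 2) := ⟨pow_ne_zero 2 hq.ne_zero⟩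
  set A := NullRing (ZMod (q ^ 2)) with hA
  set B := (Fin 2 → NullRing (ZMod q)) with hB
  haveI instFA : Finite A := inferInstanceAs (Finite (ZMod (q ^ 2)))
  haveI instF1 : Finite (NullRing (ZMod q)) := inferInstanceAs (Finite (ZMod q))
  haveI instFB : Finite B := inferInstance
  have hmemB : M.mem B := M.closed_prod (Fin 2) (fun _ => NullRing (ZMod q)) (fun _ => h1)
  have hcardA : Nat.card A = q ^ 2 := by
    rw [show Nat.card A = Nat.card (ZMod (q ^ 2)) from rfl, Nat.card_zmod]
  have hcard1 : Nat.card (NullRing (ZMod q)) = q := by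
    rw [show Nat.card (NullRing (ZMod q)) = Nat.card (ZMod q) from rfl, Nat.card_zmod]
  have hcardB : Nat.card B = q ^ 2 := by
    rw [hB, Nat.card_pi]
    simp [hcard1, sq]
  obtain ⟨e0⟩ := Finite.card_eq.mp (hcardA.trans hcardB.symm)
  set e : A ≃ B := e0.trans (Equiv.swap (e0 0) 0) with he
  have he0 : e 0 = 0 := by
    rw [he]; simp
  have hBnull : ∀ x y : B, x * y = 0 := fun x y => funext fun i => nullring_mul (x i) (y i)
  have hzdA : ∀ x : A, IsZD x ↔ x ≠ 0 :=
    fun x => ⟨fun h => h.1, fun h => ⟨h, x, h, Or.inl (nullring_mul _ _)⟩⟩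
  have hzdB : ∀ x : B, IsZD x ↔ x ≠ 0 :=
    fun x => ⟨fun h => h.1, fun h => ⟨h, x, h, Or.inl (hBnull _ _)⟩⟩
  have hne : ∀ x : A, x ≠ 0 ↔ e x ≠ 0 := by
    intro x
    constructor
    · intro h h2
      exact h (e.injective (h2.trans he0.symm))
    · intro h h2
      exact h (h2 ▸ he0)
  set vertEquiv : {x : A // IsZD x} ≃ {x : B // IsZD x} :=
    ((Equiv.subtypeEquivRight hzdA).trans (Equiv.subtypeEquiv e hne)).trans
      (Equiv.subtypeEquivRight (fun x => (hzdB x).symm)) with hve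
  have giso : Nonempty (zdvGraph A ≃g zdvGraph B) := by
    refine ⟨{ toEquiv := vertEquiv, map_rel_iff' := ?_ }⟩
    intro a b
    show (zdvGraph B).Adj (vertEquiv a) (vertEquiv b) ↔ (zdvGraph A).Adj a b
    have adjA : ∀ u v : {x : A // IsZD x}, (zdvGraph A).Adj u v ↔ u ≠ v :=
      fun u v => ⟨fun h => h.1, fun h => ⟨h, Or.inl (nullring_mul _ _)⟩⟩
    have adjB : ∀ u v : {x : B // IsZD x}, (zdvGraph B).Adj u v ↔ u ≠ v :=
      fun u v => ⟨fun h => h.1, fun h => ⟨h, Or.inl (hBnull _ _)⟩⟩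
    rw [adjA, adjB]
    exact vertEquiv.injective.ne_iff
  obtain ⟨f⟩ := hgd A B instFA instFB h2 hmemB giso
  have hq2 : 2 ≤ q := hq.two_le
  have hz1 : ¬ (q • (1 : ZMod (q ^ 2)) = 0) := by
    rw [nsmul_eq_mul, mul_one]
    intro h
    rw [ZMod.natCast_eq_zero_iff] at h
    have h2 := Nat.le_of_dvd hq.pos h
    nlinarith [sq_nonneg q]
  have hzq : ∀ c : ZMod q, q • c = 0 := by
    intro c
    rw [nsmul_eq_mul, ZMod.natCast_self, zero_mul]
  set x₀ : A := (1 : ZMod (q ^ 2)) with hx₀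
  have hqx : q • x₀ ≠ 0 := fun h => hz1 h
  have hBexp : ∀ b : B, q • b = 0 := by
    intro b
    funext i
    exact hzq (b i)
  apply hqx
  apply f.injective
  rw [map_nsmul, hBexp, map_zero]

end Endgame

section PiEval

lemma pw_apply {ι : Type*} {Rf : ι → Type*} [∀ i, NonUnitalRing (Rf i)] (Y : ∀ i, Rf i)
    (i : ι) : ∀ k, pw Y k i = pw (Y i) k
  | 0 => rfl
  | 1 => rfl
  | (k+2) => by
      show (pw Y (k+1) * Y) i = pw (Y i) (k+1) * (Y i)
      rw [show (pw Y (k+1) * Y) i = pw Y (k+1) i * Y i from rfl, pw_apply Y i (k+1)]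

lemma evalP_apply {ι : Type*} {Rf : ι → Type*} [∀ i, NonUnitalRing (Rf i)] (Y : ∀ i, Rf i)
    (i : ι) (p : Polynomial ℤ) : evalP p Y i = evalP p (Y i) := by
  rw [evalP, evalP, Polynomial.sum_def, Polynomial.sum_def]
  rw [Finset.sum_apply i p.support (fun k => p.coeff k • pw Y k)]
  exact Finset.sum_congr rfl fun k _ => by
    rw [show (p.coeff k • pw Y k) i = p.coeff k • (pw Y k i) from rfl, pw_apply]

end PiEval

section CaseTorsion

/-- If some member of `M` has an element of additive order `q^a` with `a ≥ 4`, then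
`M` is not graph-determined. -/
theorem case_high_torsion (M : RingVariety) (hgd : GraphDetermined M)
    (q : ℕ) (hq : q.Prime) (R : Type) (inst : NonUnitalRing R) (hR : M.mem R)
    (y : R) (a : ℕ) (ha : 4 ≤ a) (hord : addOrderOf y = q ^ a) : False := by
  have hqpos : 0 < q := hq.pos
  set z := q ^ (a - 2) • y with hzdef
  have hzord : addOrderOf z = q ^ 2 := by
    rw [hzdef, addOrderOf_nsmul' y (pow_ne_zero _ hq.ne_zero), hord,
      Nat.gcd_eq_right (pow_dvd_pow q (by omega)), Nat.pow_div (by omega) hqpos,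
      show a - (a - 2) = 2 by omega]
  have hya : q ^ a • y = 0 := by
    rw [← hord]; exact addOrderOf_nsmul_eq_zero y
  have hyy : q ^ a • (y * y) = 0 := by
    rw [← nsmul_mul, hya, zero_mul]
  have hz2 : z * z = 0 := by
    rw [hzdef, nsmul_mul, mul_nsmul'', smul_smul,
      show q ^ (a - 2) * q ^ (a - 2) = q ^ (a - 4) * q ^ a by
        rw [← pow_add, ← pow_add]; congr 1; omega,
      mul_smul, hyy, smul_zero]
  have h2 : M.mem (NullRing (ZMod (q ^ 2))) := by
    have := mem_nullring_zmod M R inst hR z hz2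
    rwa [hzord] at this
  set z' := q • z with hz'def
  have hz'ord : addOrderOf z' = q := by
    rw [hz'def, addOrderOf_nsmul' z hq.ne_zero, hzord,
      Nat.gcd_eq_right ⟨q, pow_two q⟩, pow_two, Nat.mul_div_cancel _ hqpos]
  have hz'2 : z' * z' = 0 := by
    rw [hz'def, nsmul_mul, mul_nsmul'', hz2, smul_zero, smul_zero]
  have h1 : M.mem (NullRing (ZMod q)) := by
    have := mem_nullring_zmod M R inst hR z' hz'2
    rwa [hz'ord] at this
  exact endgame M hgd q hq h2 h1

end CaseTorsion

section MainCases

theorem case_min (M : RingVariety) (hgd : GraphDetermined M) (e : ℕ)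
    (hepos : 0 < e)
    (hid : ∀ (R : Type) (inst : NonUnitalRing R), M.mem R → ∀ x : R, e • x = 0)
    (q : ℕ) (hq : q.Prime) (hq4 : q ^ 4 ∣ e)
    (R : Type) (inst : NonUnitalRing R) (hR : M.mem R) (x : R)
    (hx : ¬ (e / q) • x = 0) : False := by
  have he0 : e ≠ 0 := hepos.ne'
  have hqe : q ∣ e := dvd_trans (dvd_pow_self q (by norm_num)) hq4
  have heq0 : e / q ≠ 0 := (Nat.div_pos (Nat.le_of_dvd hepos hqe) hq.pos).ne'
  set n := addOrderOf x with hn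
  have hne0 : n ≠ 0 := by
    rw [hn, Ne, addOrderOf_eq_zero_iff, not_not]
    exact isOfFinAddOrder_iff_nsmul_eq_zero.mpr ⟨e, hepos, hid R inst hR x⟩
  have hdvd : n ∣ e := addOrderOf_dvd_of_nsmul_eq_zero (hid R inst hR x)
  have hnd : ¬ n ∣ (e / q) := fun h => hx (addOrderOf_dvd_iff_nsmul_eq_zero.mp (hn ▸ h))
  have h4 : 4 ≤ e.factorization q := (Nat.Prime.pow_dvd_iff_le_factorization hq he0).mp hq4
  have ha : 4 ≤ n.factorization q := by
    by_contra hlt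
    push_neg at hlt
    apply hnd
    rw [← Nat.factorization_le_iff_dvd hne0 heq0, Nat.factorization_div hqe]
    have hle := (Nat.factorization_le_iff_dvd hne0 he0).mpr hdvd
    rw [Finsupp.le_def] at hle ⊢
    intro p
    rw [Finsupp.tsub_apply]
    by_cases hp : p = q
    · subst hp
      rw [hq.factorization, Finsupp.single_eq_same]
      omega
    · rw [hq.factorization, Finsupp.single_eq_of_ne' (fun h => hp h.symm), Nat.sub_zero]
      exact hle p
  set a := n.factorization q with hadef
  have hk : q ^ a ∣ n := Nat.ordProj_dvd n q
  have hdivne : n / q ^ a ≠ 0 :=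
    (Nat.div_pos (Nat.le_of_dvd (Nat.pos_of_ne_zero hne0) hk) (pow_pos hq.pos a)).ne'
  have hyord : addOrderOf ((n / q ^ a) • x) = q ^ a := by
    rw [addOrderOf_nsmul' x hdivne, ← hn, Nat.gcd_eq_right (Nat.div_dvd_of_dvd hk),
      Nat.div_div_self hk hne0]
  exact case_high_torsion M hgd q hq R inst hR _ a ha hyord

end MainCases

section CaseEmpty

/-- A pointed ring in `M` where a given polynomial does not vanish. -/
structure BadWit (M : RingVariety) (p : Polynomial ℤ) : Type 1 where
  R : Type
  [inst : NonUnitalRing R]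
  mem : M.mem R
  y : R
  hy : evalP p y ≠ 0

theorem case_empty (M : RingVariety) (hgd : GraphDetermined M)
    (hE : ¬ ∃ m : ℕ, 0 < m ∧
      ∀ (R : Type) (inst : NonUnitalRing R), M.mem R → ∀ x : R, m • x = 0) :
    False := by
  classical
  have hwit : ∀ p : Polynomial ℤ, p.coeff 0 = 0 → p.coeff 1 ≠ 0 →
      Nonempty (BadWit M p) := by
    intro p h0 h1
    by_contra hcon
    refine hE (claimL M p.natDegree p le_rfl h0 h1 ?_)
    intro R inst hR y
    by_contra hy
    letI := inst
    exact hcon ⟨BadWit.mk R hR y hy⟩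
  set ι := {p : Polynomial ℤ // p.coeff 0 = 0 ∧ p.coeff 1 ≠ 0} with hι
  have hwit' : ∀ i : ι, Nonempty (BadWit M i.1) := fun i => hwit i.1 i.2.1 i.2.2
  let W : ∀ i : ι, BadWit M i.1 := fun i => Classical.choice (hwit' i)
  letI instRf : ∀ i : ι, NonUnitalRing ((W i).R) := fun i => (W i).inst
  set P := ∀ i : ι, (W i).R with hP
  have hmemP : M.mem P := M.closed_prod ι (fun i => (W i).R) (fun i => (W i).mem)
  set X : P := fun i => (W i).y with hX
  set S := NonUnitalSubring.closure {X} with hS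
  have hmemS : M.mem S := M.closed_subring P S hmemP
  have hXS : X ∈ S := NonUnitalSubring.subset_closure rfl
  -- every element of S is a polynomial in X
  set Tadd : AddSubgroup P :=
    { carrier := {s | ∃ p : Polynomial ℤ, p.coeff 0 = 0 ∧ evalP p X = s}
      add_mem' := by
        rintro u v ⟨p, hp0, hp⟩ ⟨r, hr0, hr⟩
        exact ⟨p + r, by simp [Polynomial.coeff_add, hp0, hr0],
          by rw [evalP_add, hp, hr]⟩
      zero_mem' := ⟨0, by simp, evalP_zero X⟩
      neg_mem' := by
        rintro u ⟨p, hp0, hp⟩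
        exact ⟨-p, by simp [hp0], by rw [← hp, ← evalPHom_apply, ← evalPHom_apply, map_neg]⟩ }
    with hTadd
  set T : NonUnitalSubring P :=
    { Tadd with
      mul_mem' := by
        rintro u v ⟨p, hp0, hp⟩ ⟨r, hr0, hr⟩
        exact ⟨p * r, by rw [Polynomial.mul_coeff_zero, hp0, zero_mul],
          by rw [evalP_mul X hp0 hr0, hp, hr]⟩ } with hT
  have hST : ∀ s : S, ∃ p : Polynomial ℤ, p.coeff 0 = 0 ∧ evalP p X = (s : P) := by
    intro s
    have hsub : (S : Set P) ⊆ (T : Set P) := by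
      rw [hS]
      apply NonUnitalSubring.closure_le.mpr
      intro u hu
      rw [Set.mem_singleton_iff.mp hu]
      exact ⟨Polynomial.X, Polynomial.coeff_X_zero, evalP_X X⟩
    exact hsub s.2
  -- uniqueness of the linear coefficient
  have huniq : ∀ p p' : Polynomial ℤ, p.coeff 0 = 0 → p'.coeff 0 = 0 →
      evalP p X = evalP p' X → p.coeff 1 = p'.coeff 1 := by
    intro p p' h0 h0' hpp
    by_contra hne
    set r := p - p' with hr
    have hr0 : r.coeff 0 = 0 := by rw [hr, Polynomial.coeff_sub, h0, h0', sub_zero]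
    have hr1 : r.coeff 1 ≠ 0 := by
      rw [hr, Polynomial.coeff_sub]
      exact sub_ne_zero.mpr hne
    have hrX : evalP r X = 0 := by rw [hr, evalP_sub, hpp, sub_self]
    set i0 : ι := ⟨r, hr0, hr1⟩ with hi0
    have hzero := congrFun hrX i0
    rw [evalP_apply] at hzero
    exact (W i0).hy hzero
  choose rep hrep0 hrepX using hST
  have hc : ∀ (s : S) (p : Polynomial ℤ), p.coeff 0 = 0 → evalP p X = (s : P) →
      (rep s).coeff 1 = p.coeff 1 :=
    fun s p h0 hp => huniq _ _ (hrep0 s) h0 (by rw [hrepX s, hp])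
  -- the homomorphisms onto null rings of cyclic groups
  have hphi : ∀ nn : ℕ, M.mem (NullRing (ZMod nn)) := by
    intro nn
    let φ : S →ₙ+* NullRing (ZMod nn) :=
      { toFun := fun s => (((rep s).coeff 1 : ℤ) : ZMod nn)
        map_zero' := by
          show (((rep 0).coeff 1 : ℤ) : ZMod nn) = 0
          have h := hc 0 0 (by simp) (by rw [evalP_zero, ZeroMemClass.coe_zero])
          rw [h, Polynomial.coeff_zero, Int.cast_zero]
        map_add' := by
          intro a b
          show (((rep (a + b)).coeff 1 : ℤ) : ZMod nn)
            = (((rep a).coeff 1 : ℤ) : ZMod nn) + (((rep b).coeff 1 : ℤ) : ZMod nn)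
          have h := hc (a + b) (rep a + rep b)
            (by rw [Polynomial.coeff_add, hrep0 a, hrep0 b, add_zero])
            (by rw [evalP_add, hrepX a, hrepX b, AddMemClass.coe_add])
          rw [h, Polynomial.coeff_add, Int.cast_add]
        map_mul' := by
          intro a b
          have h := hc (a * b) (rep a * rep b)
            (by rw [Polynomial.mul_coeff_zero, hrep0 a, zero_mul])
            (by rw [evalP_mul X (hrep0 a) (hrep0 b), hrepX a, hrepX b, MulMemClass.coe_mul])
          have h2 : (((rep (a * b)).coeff 1 : ℤ) : ZMod nn) = 0 := by
            rw [h, Polynomial.mul_coeff_one, hrep0 a, hrep0 b, zero_mul, mul_zero,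
              add_zero, Int.cast_zero]
          exact h2 }
    have hsurj : Function.Surjective φ := by
      intro t
      obtain ⟨j, hj⟩ := ZMod.intCast_surjective (show ZMod nn from t)
      refine ⟨⟨j • X, zsmul_mem hXS j⟩, ?_⟩
      have h := hc ⟨j • X, zsmul_mem hXS j⟩ (j • Polynomial.X)
        (by rw [Polynomial.coeff_smul, Polynomial.coeff_X_zero, smul_zero])
        (by rw [evalP_smul, evalP_X])
      show (((rep _).coeff 1 : ℤ) : ZMod nn) = t
      rw [h, Polynomial.coeff_smul, Polynomial.coeff_X_one, smul_eq_mul, mul_one]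
      exact hj
    exact M.closed_image S (NullRing (ZMod nn)) φ hsurj hmemS
  exact endgame M hgd 2 Nat.prime_two (hphi (2 ^ 2)) (hphi 2)

end CaseEmpty

/-- If `𝔐` is a graph-determined variety, then `𝔐` satisfies an identity `m·x = 0`
for some positive integer `m` not divisible by the fourth power of any prime
(i.e. `m = q₁^β₁ ⋯ q_t^β_t` with the `qᵢ` pairwise distinct primes and all `βᵢ ≤ 3`). -/
theorem graphDetermined_char_identity (M : RingVariety) (hgd : GraphDetermined M) :
    ∃ m : ℕ, 0 < m ∧ (∀ q : ℕ, q.Prime → ¬ q ^ 4 ∣ m) ∧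
      ∀ (R : Type) [inst : NonUnitalRing R], M.mem R → ∀ x : R, m • x = 0 := by
  classical
  by_cases hE : ∃ m : ℕ, 0 < m ∧
      ∀ (R : Type) (inst : NonUnitalRing R), M.mem R → ∀ x : R, m • x = 0
  · set E := {m : ℕ | 0 < m ∧
      ∀ (R : Type) (inst : NonUnitalRing R), M.mem R → ∀ x : R, m • x = 0} with hEdef
    have hEne : E.Nonempty := hE
    set e := sInf E with he
    have heE : e ∈ E := Nat.sInf_mem hEne
    by_cases hfree : ∀ q : ℕ, q.Prime → ¬ q ^ 4 ∣ e
    · exact ⟨e, heE.1, hfree, fun R inst hR x => heE.2 R inst hR x⟩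
    · exfalso
      push_neg at hfree
      obtain ⟨q, hq, hq4⟩ := hfree
      have hqe : q ∣ e := dvd_trans (dvd_pow_self q (by norm_num)) hq4
      have hlt : e / q < e := Nat.div_lt_self heE.1 hq.one_lt
      have hnotE : e / q ∉ E := Nat.notMem_of_lt_sInf (he ▸ hlt)
      have hpos : 0 < e / q := Nat.div_pos (Nat.le_of_dvd heE.1 hqe) hq.pos
      have hnotid : ¬ ∀ (R : Type) (inst : NonUnitalRing R), M.mem R →
          ∀ x : R, (e / q) • x = 0 := fun h => hnotE ⟨hpos, h⟩
      push_neg at hnotid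
      obtain ⟨R, inst, hR, x, hx⟩ := hnotid
      exact case_min M hgd e heE.1 (fun R inst hR x => heE.2 R inst hR x) q hq hq4
        R inst hR x hx
  · exact absurd (case_empty M hgd hE) not_false
end
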